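/- arXiv:1908.04043 — 3 statements merged into one kernel-verified Lean document; each statement's English description precedes it below -/
import Mathlib

section
/- For any positive integer n that is not a perfect square, there exists an odd prime p not dividing n such that the Legendre symbol (n/p) = -1, i.e., n is a quadratic non-residue modulo p. -/
open jacobiSym in
lemma aux_odd_fact (n : ℕ) (hn : 0 < n) (hns : ¬ IsSquare n) :
    ∃ q : ℕ, q.Prime ∧ Odd (n.factorization q) := by
  by_contra h
  push_neg at h
  simp only [Nat.not_odd_iff_even] at h
  apply hns
  have h' : ∀ q : ℕ, Even (n.factorization q) := by
    intro q
    by_cases hq : q.Prime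
    · exact h q hq
    · rw [Nat.factorization_eq_zero_of_not_prime n hq]; exact Even.zero
  rw [← Nat.factorization_prod_pow_eq_self hn.ne', Finsupp.prod]
  apply Finset.prod_induction _ IsSquare (fun a b ha hb => ha.mul hb) IsSquare.one
  intro p _
  obtain ⟨c, hc⟩ := h' p
  exact ⟨p ^ c, by rw [hc, pow_add]⟩

open jacobiSym in
lemma aux_jacobi (n : ℕ) (hn : 0 < n) (hns : ¬ IsSquare n) :
    ∃ m : ℕ, Odd m ∧ jacobiSym (n : ℤ) m = -1 := by
  obtain ⟨q, hq, hk⟩ : ∃ q : ℕ, q.Prime ∧ Odd (n.factorization q) :=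
    aux_odd_fact n hn hns
  set k := n.factorization q with hkdef
  set r := n / q ^ k with hrdef
  have hqk : q ^ k ∣ n := Nat.ordProj_dvd n q
  have hnr : q ^ k * r = n := Nat.mul_div_cancel' hqk
  have hr0 : r ≠ 0 := by
    intro h
    rw [h, mul_zero] at hnr
    exact hn.ne' hnr.symm
  have hco : Nat.Coprime q r := Nat.coprime_ordCompl hq hn.ne'
  rcases eq_or_ne q 2 with hq2 | hq2
  · -- q = 2 : r is odd; choose m ≡ 5 [MOD 8], m ≡ 1 [MOD r]
    subst hq2
    have hrodd : Odd r := by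
      rcases Nat.even_or_odd r with he | ho
      · exfalso
        have h2 : 2 ∣ Nat.gcd 2 r := Nat.dvd_gcd dvd_rfl he.two_dvd
        rw [hco] at h2
        omega
      · exact ho
    have co8 : Nat.Coprime 8 r := by
      have : Nat.Coprime 2 r := hco
      simpa using Nat.Coprime.pow_left 3 this
    obtain ⟨m, hm8, hmr⟩ := Nat.chineseRemainder co8 5 1
    have hm8' : m % 8 = 5 := hm8
    have hmodd : Odd m := by
      rcases Nat.even_or_odd m with he | ho
      · exfalso
        obtain ⟨c, hc⟩ := he
        omega
      · exact ho
    have hm4 : m % 4 = 1 := by omega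
    refine ⟨m, hmodd, ?_⟩
    have hsplit : ((n : ℤ)) = (2 : ℤ) ^ k * (r : ℤ) := by
      exact_mod_cast congrArg (Nat.cast : ℕ → ℤ) hnr.symm
    rw [hsplit, jacobiSym.mul_left, jacobiSym.pow_left]
    have h2 : jacobiSym 2 m = -1 := by
      rw [jacobiSym.at_two hmodd]
      have : ((m : ℕ) : ZMod 8) = ((5 : ℕ) : ZMod 8) := by
        rw [← ZMod.natCast_mod m 8, hm8']
      rw [this]
      decide
    have hr1 : jacobiSym (r : ℤ) m = 1 := by
      rw [← jacobiSym.quadratic_reciprocity_one_mod_four hm4 hrodd]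
      have : ((m : ℤ)) % r = ((1 : ℤ)) % r := by
        have := hmr
        unfold Nat.ModEq at this
        exact_mod_cast congrArg (Nat.cast : ℕ → ℤ) this
      rw [jacobiSym.mod_left' this, jacobiSym.one_left]
    rw [h2, hr1, mul_one, Odd.neg_one_pow hk]
  · -- q odd
    haveI : Fact q.Prime := ⟨hq⟩
    have hqodd : Odd q := hq.odd_of_ne_two hq2
    obtain ⟨u, hu⟩ := FiniteField.exists_nonsquare (F := ZMod q)
      (by rw [ZMod.ringChar_zmod_n]; exact hq2)
    have co : Nat.Coprime q (8 * r) := by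
      refine Nat.Coprime.mul_right ?_ hco
      have : Nat.Coprime q 2 := (Nat.coprime_primes hq Nat.prime_two).mpr hq2
      simpa using this.pow_right 3
    obtain ⟨m, hmq, hm8r⟩ := Nat.chineseRemainder co u.val 1
    have hm8 : m % 8 = 1 := by
      have : m ≡ 1 [MOD 8] := (Nat.ModEq.of_dvd ⟨r, rfl⟩ hm8r)
      simpa [Nat.ModEq] using this
    have hmodd : Odd m := by
      rcases Nat.even_or_odd m with he | ho
      · exfalso; obtain ⟨c, hc⟩ := he; omega
      · exact ho
    have hm4 : m % 4 = 1 := by omega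
    have hmr : m ≡ 1 [MOD r] := Nat.ModEq.of_dvd ⟨8, by ring⟩ hm8r
    refine ⟨m, hmodd, ?_⟩
    -- split r = 2 ^ a * r₂
    set a := r.factorization 2 with hadef
    set r₂ := r / 2 ^ a with hr2def
    have h2a : 2 ^ a ∣ r := Nat.ordProj_dvd r 2
    have hrr : 2 ^ a * r₂ = r := Nat.mul_div_cancel' h2a
    have hr₂0 : r₂ ≠ 0 := by
      intro h; rw [h, mul_zero] at hrr; exact hr0 hrr.symm
    have hr₂odd : Odd r₂ := by
      rcases Nat.even_or_odd r₂ with he | ho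
      · exfalso
        have : 2 ^ (a + 1) ∣ r := by
          rw [← hrr, pow_succ]
          exact mul_dvd_mul_left _ he.two_dvd
        exact Nat.pow_succ_factorization_not_dvd hr0 Nat.prime_two this
      · exact ho
    have hsplit : ((n : ℤ)) = (q : ℤ) ^ k * ((2 : ℤ) ^ a * (r₂ : ℤ)) := by
      have : n = q ^ k * (2 ^ a * r₂) := by rw [hrr, hnr]
      exact_mod_cast congrArg (Nat.cast : ℕ → ℤ) this
    rw [hsplit, jacobiSym.mul_left, jacobiSym.mul_left, jacobiSym.pow_left,
      jacobiSym.pow_left]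
    have h2 : jacobiSym 2 m = 1 := by
      rw [jacobiSym.at_two hmodd]
      have : ((m : ℕ) : ZMod 8) = ((1 : ℕ) : ZMod 8) := by
        rw [← ZMod.natCast_mod m 8, hm8]
      rw [this]; decide
    have hr₂1 : jacobiSym (r₂ : ℤ) m = 1 := by
      rw [← jacobiSym.quadratic_reciprocity_one_mod_four hm4 hr₂odd]
      have hmr₂ : m ≡ 1 [MOD r₂] := Nat.ModEq.of_dvd ⟨2 ^ a, by rw [← hrr]; ring⟩ hmr
      have : ((m : ℤ)) % r₂ = ((1 : ℤ)) % r₂ := by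
        unfold Nat.ModEq at hmr₂
        exact_mod_cast congrArg (Nat.cast : ℕ → ℤ) hmr₂
      rw [jacobiSym.mod_left' this, jacobiSym.one_left]
    have hqm : jacobiSym (q : ℤ) m = -1 := by
      rw [← jacobiSym.quadratic_reciprocity_one_mod_four hm4 hqodd,
        ← legendreSym.to_jacobiSym]
      rw [legendreSym.eq_neg_one_iff]
      have : ((m : ℤ) : ZMod q) = u := by
        have h1 : ((m : ℕ) : ZMod q) = ((u.val : ℕ) : ZMod q) :=
          (ZMod.natCast_eq_natCast_iff _ _ _).mpr hmq
        push_cast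
        rw [h1, ZMod.natCast_rightInverse u]
      rw [this]
      exact hu
    rw [h2, hr₂1, hqm, one_pow, mul_one, mul_one, Odd.neg_one_pow hk]

theorem stmt_2 (n : ℕ) (hn : 0 < n) (hns : ¬ IsSquare n) :
    ∃ p : ℕ, ∃ _ : Fact p.Prime, p ≠ 2 ∧ ¬ p ∣ n ∧ legendreSym p (n : ℤ) = -1 := by
  obtain ⟨m, hmodd, hjm⟩ := aux_jacobi n hn hns
  obtain ⟨p, hp, hpm, hjp⟩ := jacobiSym.eq_neg_one_at_prime_divisor_of_eq_neg_one hjm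
  haveI : Fact p.Prime := ⟨hp⟩
  have hleg : legendreSym p (n : ℤ) = -1 := by
    rw [jacobiSym.legendreSym.to_jacobiSym]; exact hjp
  refine ⟨p, ⟨hp⟩, ?_, ?_, hleg⟩
  · rintro rfl
    obtain ⟨c, hc⟩ := hpm
    obtain ⟨d, hd⟩ := hmodd
    omega
  · intro hdvd
    have h0 : legendreSym p (n : ℤ) = 0 := by
      rw [legendreSym.eq_zero_iff]
      exact_mod_cast (ZMod.natCast_eq_zero_iff n p).mpr hdvd
    rw [hleg] at h0
    exact absurd h0 (by norm_num)
end

section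
/- Let m and n be integers such that -m*n is a perfect square (the square of an integer). Then there exist integers a, x, y with m = -a*x^2 and n = a*y^2. -/
theorem stmt_5 (m n : ℤ) (h : IsSquare (-(m * n))) :
    ∃ a x y : ℤ, m = -(a * x ^ 2) ∧ n = a * y ^ 2 := by
  obtain ⟨s, hs⟩ := h
  rcases eq_or_ne m 0 with hm | hm
  · exact ⟨n, 0, 1, by simp [hm], by ring⟩
  rcases eq_or_ne n 0 with hn | hn
  · exact ⟨-m, 1, 0, by ring, by simp [hn]⟩
  set g : ℤ := (Int.gcd m n : ℤ) with hgdef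
  have hgpos : 0 < Int.gcd m n := Int.gcd_pos_of_ne_zero_left n hm
  have hg0 : g ≠ 0 := by rw [hgdef]; exact_mod_cast hgpos.ne'
  have hgm : g ∣ m := Int.gcd_dvd_left m n
  have hgn : g ∣ n := Int.gcd_dvd_right m n
  obtain ⟨m', hm'⟩ := hgm
  obtain ⟨n', hn'⟩ := hgn
  have h1 : m / g = m' := by rw [hm', Int.mul_ediv_cancel_left _ hg0]
  have h2 : n / g = n' := by rw [hn', Int.mul_ediv_cancel_left _ hg0]
  have hcop : IsCoprime m' n' := by
    rw [Int.isCoprime_iff_gcd_eq_one]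
    have h3 := Int.gcd_div_gcd_div_gcd hgpos
    rwa [show (Int.gcd m n : ℤ) = g from rfl, h1, h2] at h3
  have hs2 : g ^ 2 * (m' * (-n')) = s ^ 2 := by
    rw [hm', hn'] at hs; nlinarith [hs]
  have hgs : g ∣ s :=
    (Int.pow_dvd_pow_iff (n := 2) two_ne_zero).mp ⟨m' * (-n'), hs2.symm⟩
  obtain ⟨t, ht⟩ := hgs
  have ht2 : m' * (-n') = t ^ 2 := by
    have : g ^ 2 * (m' * (-n')) = g ^ 2 * t ^ 2 := by rw [hs2, ht]; ring
    exact mul_left_cancel₀ (pow_ne_zero 2 hg0) this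
  obtain ⟨u, hu⟩ := Int.sq_of_isCoprime (hcop.neg_right) ht2
  have hm'0 : m' ≠ 0 := by rintro rfl; exact hm (by simp [hm'])
  have hu0 : u ≠ 0 := by rintro rfl; simp at hu; tauto
  rcases hu with hu | hu
  · have hut : u ∣ t := by
      refine (Int.pow_dvd_pow_iff (n := 2) two_ne_zero).mp ⟨-n', ?_⟩
      linear_combination -ht2 - n' * hu
    obtain ⟨v, hv⟩ := hut
    have hnv : n' = -(v ^ 2) := by
      have hc : u ^ 2 * (-n') = u ^ 2 * (v ^ 2) := by
        linear_combination ht2 + n' * hu + (t + u * v) * hv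
      have := mul_left_cancel₀ (pow_ne_zero 2 hu0) hc
      linarith
    exact ⟨-g, u, v, by rw [hm', hu]; ring, by rw [hn', hnv]; ring⟩
  · have hut : u ∣ t := by
      refine (Int.pow_dvd_pow_iff (n := 2) two_ne_zero).mp ⟨n', ?_⟩
      linear_combination -ht2 - n' * hu
    obtain ⟨v, hv⟩ := hut
    have hnv : n' = v ^ 2 := by
      have hc : u ^ 2 * n' = u ^ 2 * (v ^ 2) := by
        linear_combination ht2 + n' * hu + (t + u * v) * hv
      exact mul_left_cancel₀ (pow_ne_zero 2 hu0) hc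
    exact ⟨g, u, v, by rw [hm', hu]; ring, by rw [hn', hnv]⟩
end

section
/- Let a > 0 and b < 0 be integers such that -a*b is not a perfect square. Then there exist positive integers c and d such that the quadratic form q(x1,x2,x3,x4) = a*x1^2 + x1*x3 + c*x3^2 + b*x2^2 + x2*x4 + d*x4^2 over the integers is anisotropic: q(v) = 0 implies v = 0. -/
/-- If `-(A*B)` is a nonsquare mod a prime `q`, then `A x² + B y² ≡ 0 mod q`
forces `q ∣ x` and `q ∣ y`. -/
lemma zmod_pair (q : ℕ) [Fact q.Prime] (A B : ℤ)
    (h : ¬ IsSquare ((-(A * B) : ℤ) : ZMod q)) :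
    ∀ x y : ℤ, (q : ℤ) ∣ A * x ^ 2 + B * y ^ 2 → (q : ℤ) ∣ x ∧ (q : ℤ) ∣ y := by
  intro x y hdvd
  have hA : ((A : ZMod q)) ≠ 0 := by
    intro h0
    exact h ⟨0, by push_cast; rw [h0]; ring⟩
  have hB : ((B : ZMod q)) ≠ 0 := by
    intro h0
    exact h ⟨0, by push_cast; rw [h0]; ring⟩
  have hz : (A : ZMod q) * (x : ZMod q) ^ 2 + (B : ZMod q) * (y : ZMod q) ^ 2 = 0 := by
    have := (ZMod.intCast_zmod_eq_zero_iff_dvd _ q).mpr hdvd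
    push_cast at this
    exact this
  have hy : (y : ZMod q) = 0 := by
    by_contra hy0
    apply h
    refine ⟨(A : ZMod q) * (x : ZMod q) * ((y : ZMod q))⁻¹, ?_⟩
    have hyinv : (y : ZMod q) * ((y : ZMod q))⁻¹ = 1 := ZMod.mul_inv_of_unit _ (Ne.isUnit hy0)
    push_cast
    field_simp
    have : (A : ZMod q) * (x : ZMod q) ^ 2 = -((B : ZMod q) * (y : ZMod q) ^ 2) := by
      linear_combination hz
    linear_combination (-1 : ZMod q) * this
  have hx : (x : ZMod q) = 0 := by
    rw [hy] at hz
    have : (A : ZMod q) * (x : ZMod q) ^ 2 = 0 := by linear_combination hz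
    rcases mul_eq_zero.mp this with h' | h'
    · exact absurd h' hA
    · exact pow_eq_zero_iff (by norm_num) |>.mp h'
  exact ⟨(ZMod.intCast_zmod_eq_zero_iff_dvd _ q).mp hx,
    (ZMod.intCast_zmod_eq_zero_iff_dvd _ q).mp hy⟩

/-- Descent lemma. -/
lemma descent (q : ℕ) (hq : q.Prime) (A B E1 E2 : ℤ)
    (h1 : ∀ x y : ℤ, (q : ℤ) ∣ A * x ^ 2 + B * y ^ 2 → (q : ℤ) ∣ x ∧ (q : ℤ) ∣ y)
    (h2 : ∀ x y : ℤ, (q : ℤ) ∣ E1 * x ^ 2 + E2 * y ^ 2 → (q : ℤ) ∣ x ∧ (q : ℤ) ∣ y) :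
    ∀ X Y Z W : ℤ, A * X ^ 2 + B * Y ^ 2 + q * (E1 * Z ^ 2 + E2 * W ^ 2) = 0 →
      X = 0 ∧ Y = 0 ∧ Z = 0 ∧ W = 0 := by
  have hq0 : (q : ℤ) ≠ 0 := by exact_mod_cast hq.ne_zero
  have hq2 : 2 ≤ q := hq.two_le
  suffices H : ∀ n : ℕ, ∀ X Y Z W : ℤ,
      X.natAbs + Y.natAbs + Z.natAbs + W.natAbs = n →
      A * X ^ 2 + B * Y ^ 2 + q * (E1 * Z ^ 2 + E2 * W ^ 2) = 0 →
      X = 0 ∧ Y = 0 ∧ Z = 0 ∧ W = 0 by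
    intro X Y Z W h
    exact H _ X Y Z W rfl h
  intro n
  induction n using Nat.strong_induction_on with
  | _ n ih =>
    intro X Y Z W hsum heq
    by_cases htriv : X = 0 ∧ Y = 0 ∧ Z = 0 ∧ W = 0
    · exact htriv
    obtain ⟨X', hX'⟩ : (q : ℤ) ∣ X := by
      have : (q : ℤ) ∣ A * X ^ 2 + B * Y ^ 2 :=
        ⟨-(E1 * Z ^ 2 + E2 * W ^ 2), by linarith⟩
      exact (h1 X Y this).1
    obtain ⟨Y', hY'⟩ : (q : ℤ) ∣ Y := by
      have : (q : ℤ) ∣ A * X ^ 2 + B * Y ^ 2 :=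
        ⟨-(E1 * Z ^ 2 + E2 * W ^ 2), by linarith⟩
      exact (h1 X Y this).2
    have heq2 : (q : ℤ) * (A * X' ^ 2 + B * Y' ^ 2) + (E1 * Z ^ 2 + E2 * W ^ 2) = 0 := by
      have := heq
      rw [hX', hY'] at this
      have h' : (q : ℤ) * ((q : ℤ) * (A * X' ^ 2 + B * Y' ^ 2) + (E1 * Z ^ 2 + E2 * W ^ 2)) = 0 := by
        ring_nf
        ring_nf at this
        linarith
      exact (mul_eq_zero.mp h').resolve_left hq0
    obtain ⟨Z', hZ'⟩ : (q : ℤ) ∣ Z := by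
      have : (q : ℤ) ∣ E1 * Z ^ 2 + E2 * W ^ 2 :=
        ⟨-(A * X' ^ 2 + B * Y' ^ 2), by linarith⟩
      exact (h2 Z W this).1
    obtain ⟨W', hW'⟩ : (q : ℤ) ∣ W := by
      have : (q : ℤ) ∣ E1 * Z ^ 2 + E2 * W ^ 2 :=
        ⟨-(A * X' ^ 2 + B * Y' ^ 2), by linarith⟩
      exact (h2 Z W this).2
    have heq3 : A * X' ^ 2 + B * Y' ^ 2 + q * (E1 * Z' ^ 2 + E2 * W' ^ 2) = 0 := by
      rw [hZ', hW'] at heq2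
      have h' : (q : ℤ) * (A * X' ^ 2 + B * Y' ^ 2 + q * (E1 * Z' ^ 2 + E2 * W' ^ 2)) = 0 := by
        ring_nf; ring_nf at heq2; linarith
      exact (mul_eq_zero.mp h').resolve_left hq0
    -- the new sum is strictly smaller
    have hle : ∀ u u' : ℤ, u = q * u' → u'.natAbs ≤ u.natAbs := by
      intro u u' hu
      rw [hu, Int.natAbs_mul]
      calc u'.natAbs = 1 * u'.natAbs := (one_mul _).symm
        _ ≤ (q : ℤ).natAbs * u'.natAbs :=
          Nat.mul_le_mul_right _ (by simpa using hq.one_lt.le)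
    have hlt : ∀ u u' : ℤ, u = q * u' → u ≠ 0 → u'.natAbs < u.natAbs := by
      intro u u' hu hu0
      have hu'0 : u' ≠ 0 := by rintro rfl; simp at hu; exact hu0 hu
      rw [hu, Int.natAbs_mul]
      have h1' : 1 ≤ u'.natAbs := Int.natAbs_pos.mpr hu'0
      have : (q : ℤ).natAbs = q := Int.natAbs_natCast q
      rw [this]
      calc u'.natAbs < 2 * u'.natAbs := by omega
        _ ≤ q * u'.natAbs := Nat.mul_le_mul_right _ hq2
    have hlt' : X'.natAbs + Y'.natAbs + Z'.natAbs + W'.natAbs < n := by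
      rcases not_and_or.mp htriv with h0 | h0
      · have := hlt X X' hX' h0
        have := hle Y Y' hY'; have := hle Z Z' hZ'; have := hle W W' hW'
        omega
      rcases not_and_or.mp h0 with h0 | h0
      · have := hlt Y Y' hY' h0
        have := hle X X' hX'; have := hle Z Z' hZ'; have := hle W W' hW'
        omega
      rcases not_and_or.mp h0 with h0 | h0
      · have := hlt Z Z' hZ' h0
        have := hle X X' hX'; have := hle Y Y' hY'; have := hle W W' hW'
        omega
      · have := hlt W W' hW' h0
        have := hle X X' hX'; have := hle Y Y' hY'; have := hle Z Z' hZ'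
        omega
    obtain ⟨hX0, hY0, hZ0, hW0⟩ := ih _ hlt' X' Y' Z' W' rfl heq3
    refine ⟨?_, ?_, ?_, ?_⟩ <;> simp [hX', hY', hZ', hW', hX0, hY0, hZ0, hW0]

/-- CRT construction: given `A ≠ 0` and `q` coprime to `4A`, find `e < 0` and `e' > 0`
with `e ≡ e' ≡ 1 mod q` and `q*e ≡ q*e' ≡ 1 mod 4A`. -/
lemma crt_aux (A q : ℤ) (hA : A ≠ 0) (hq : q ≠ 0) (h : IsCoprime q (4 * A)) :
    ∃ e e' : ℤ, e < 0 ∧ 0 < e' ∧ q ∣ e - 1 ∧ q ∣ e' - 1 ∧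
      4 * A ∣ 1 - q * e ∧ 4 * A ∣ 1 - q * e' := by
  have hpow : IsCoprime (q ^ 2) (4 * A) := IsCoprime.pow_left h
  obtain ⟨u, v, huv⟩ := hpow
  set e₀ : ℤ := 1 + q * (u * (1 - q)) with he₀
  have hkey : 4 * A ∣ 1 - q * e₀ := by
    refine ⟨(1 - q) * v, ?_⟩
    rw [he₀]
    linear_combination (q - 1) * huv
  set s : ℤ := q * (4 * A) with hs
  have hs0 : s ≠ 0 := mul_ne_zero hq (by simpa using hA)
  have hsabs : 1 ≤ |s| := Int.one_le_abs (by simpa using hs0)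
  refine ⟨e₀ - (|e₀| + 1) * |s|, e₀ + (|e₀| + 1) * |s|, ?_, ?_, ?_, ?_, ?_, ?_⟩
  · nlinarith [abs_nonneg e₀, neg_abs_le e₀, le_abs_self e₀]
  · nlinarith [abs_nonneg e₀, neg_abs_le e₀, le_abs_self e₀]
  · have h1 : q ∣ e₀ - 1 := ⟨u * (1 - q), by rw [he₀]; ring⟩
    have h2 : q ∣ (|e₀| + 1) * |s| := by
      refine Dvd.dvd.mul_left ?_ _
      rcases abs_choice s with h' | h' <;> rw [h']
      · exact Dvd.intro _ rfl
      · exact dvd_neg.mpr (Dvd.intro _ rfl)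
    have := dvd_sub h1 h2
    convert this using 1; rfl; ring
  · have h1 : q ∣ e₀ - 1 := ⟨u * (1 - q), by rw [he₀]; ring⟩
    have h2 : q ∣ (|e₀| + 1) * |s| := by
      refine Dvd.dvd.mul_left ?_ _
      rcases abs_choice s with h' | h' <;> rw [h']
      · exact Dvd.intro _ rfl
      · exact dvd_neg.mpr (Dvd.intro _ rfl)
    have := dvd_add h1 h2
    convert this using 1; rfl; ring
  · have h2 : 4 * A ∣ q * ((|e₀| + 1) * |s|) := by
      have : 4 * A ∣ |s| := by
        rcases abs_choice s with h' | h' <;> rw [h']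
        · exact ⟨q, by rw [hs]; ring⟩
        · exact ⟨-q, by rw [hs]; ring⟩
      exact Dvd.dvd.mul_left (Dvd.dvd.mul_left this _) _
    have := dvd_add hkey h2
    convert this using 1; rfl; ring
  · have h2 : 4 * A ∣ q * ((|e₀| + 1) * |s|) := by
      have : 4 * A ∣ |s| := by
        rcases abs_choice s with h' | h' <;> rw [h']
        · exact ⟨q, by rw [hs]; ring⟩
        · exact ⟨-q, by rw [hs]; ring⟩
      exact Dvd.dvd.mul_left (Dvd.dvd.mul_left this _) _
    have := dvd_sub hkey h2
    convert this using 1; rfl; ring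

lemma coprime_of_no_common_prime {t k : ℕ} (ht : t ≠ 0)
    (hp : ∀ ℓ : ℕ, ℓ.Prime → ℓ ∣ t → ℓ ∣ k → False) :
    Nat.Coprime t k := by
  by_contra hg
  set g := Nat.gcd t k with hgdef
  have hg1 : g ≠ 1 := hg
  have hℓp : g.minFac.Prime := Nat.minFac_prime hg1
  exact hp g.minFac hℓp ((Nat.minFac_dvd g).trans (Nat.gcd_dvd_left t k))
    ((Nat.minFac_dvd g).trans (Nat.gcd_dvd_right t k))

lemma exists_prime_nonresidue (m : ℕ) (hm : 0 < m) (h : ¬ IsSquare m) :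
    ∃ q : ℕ, q.Prime ∧ q ≠ 2 ∧ ¬ IsSquare ((m : ℤ) : ZMod q) := by
  suffices hk : ∃ k : ℕ, Odd k ∧ jacobiSym (m : ℤ) k = -1 by
    obtain ⟨k, hkodd, hkJ⟩ := hk
    obtain ⟨q, hqp, hqdvd, hqJ⟩ := jacobiSym.eq_neg_one_at_prime_divisor_of_eq_neg_one hkJ
    refine ⟨q, hqp, ?_, ZMod.nonsquare_of_jacobiSym_eq_neg_one hqJ⟩
    rintro rfl
    rw [Nat.odd_iff] at hkodd
    obtain ⟨j, rfl⟩ := hqdvd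
    omega
  obtain ⟨m₀, t, hm₀pos, htpos, htm, hsf⟩ := Nat.sq_mul_squarefree_of_pos hm
  have ht0 : t ≠ 0 := htpos.ne'
  have hm₀1 : m₀ ≠ 1 := by
    rintro rfl
    exact h ⟨t, by rw [← htm]; ring⟩
  obtain ⟨w, m₁, hw, hm₀, hm₁odd⟩ :
      ∃ w m₁ : ℕ, (w = 1 ∨ w = 2) ∧ m₀ = w * m₁ ∧ m₁ % 2 = 1 := by
    by_cases h2 : 2 ∣ m₀
    · obtain ⟨m₁, hm₁⟩ := h2
      refine ⟨2, m₁, Or.inr rfl, hm₁, ?_⟩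
      by_contra hodd
      have h2m₁ : 2 ∣ m₁ := by omega
      obtain ⟨j, rfl⟩ := h2m₁
      exact Nat.Prime.one_lt Nat.prime_two |>.ne'
        (Nat.isUnit_iff.mp (hsf 2 ⟨j, by rw [hm₁]; ring⟩))
    · exact ⟨1, m₀, Or.inl rfl, (one_mul m₀).symm, by omega⟩
  have hm₁0 : m₁ ≠ 0 := by
    rintro rfl
    rw [mul_zero] at hm₀
    exact hm₀pos.ne' hm₀
  have hm₁sf : Squarefree m₁ := hsf.squarefree_of_dvd ⟨w, by rw [hm₀]; ring⟩
  by_cases hm₁1 : m₁ = 1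
  · -- Case A : m₀ = 2
    have hm₀2 : m₀ = 2 := by
      rcases hw with rfl | rfl
      · exact absurd (by rw [hm₀, hm₁1]) hm₀1
      · rw [hm₀, hm₁1]
    set T := ordCompl[2] t with hT
    have hcop : Nat.Coprime 8 T := by
      have h2T := Nat.coprime_ordCompl Nat.prime_two ht0
      have h8 : (8 : ℕ) = 2 ^ 3 := by norm_num
      rw [h8]
      exact h2T.pow_left 3
    obtain ⟨k, hk8, hkT⟩ := Nat.chineseRemainder hcop 5 1
    have hk8' : k % 8 = 5 := hk8
    have hkodd : k % 2 = 1 := by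
      have := Nat.mod_mod_of_dvd k (by norm_num : 2 ∣ 8)
      omega
    have hcoptk : Nat.Coprime t k := by
      refine coprime_of_no_common_prime ht0 ?_
      intro ℓ hℓp hℓt hℓk
      rcases eq_or_ne ℓ 2 with rfl | h2
      · obtain ⟨j, rfl⟩ := hℓk; omega
      · have hℓT : ℓ ∣ T := Nat.dvd_ordCompl_of_dvd_not_dvd hℓt
          (fun hdvd => h2 ((Nat.prime_dvd_prime_iff_eq Nat.prime_two hℓp).mp hdvd).symm)
        have hkmod : k % ℓ = 1 % ℓ := hkT.of_dvd hℓT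
        have h1ℓ : 1 % ℓ = 1 := Nat.one_mod_eq_one.mpr hℓp.one_lt.ne'
        obtain ⟨j, rfl⟩ := hℓk
        rw [Nat.mul_mod_right] at hkmod
        omega
    refine ⟨k, Nat.odd_iff.mpr hkodd, ?_⟩
    have hm' : (m : ℤ) = ((t : ℤ)) ^ 2 * 2 := by
      have h' : (t : ℕ) ^ 2 * 2 = m := by rw [← htm, hm₀2]
      exact_mod_cast (congrArg (fun x : ℕ => (x : ℤ)) h').symm
    rw [hm', jacobiSym.mul_left]
    have h1 : jacobiSym ((t : ℤ) ^ 2) k = 1 := by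
      apply jacobiSym.sq_one'
      simpa [Int.gcd] using hcoptk
    have h2 : jacobiSym 2 k = -1 := by
      rw [jacobiSym.at_two (Nat.odd_iff.mpr hkodd), ZMod.χ₈_nat_mod_eight, hk8']
      decide
    rw [h1, h2]; ring
  · -- Case B : odd prime factor p of m₁
    set p := m₁.minFac with hpdef
    have hp : p.Prime := Nat.minFac_prime hm₁1
    have hpdvd : p ∣ m₁ := Nat.minFac_dvd m₁
    have hp2 : p ≠ 2 := by
      intro hpe
      have h2m : 2 ∣ m₁ := hpe ▸ hpdvd
      omega
    obtain ⟨m₂, hm₂⟩ := hpdvd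
    have hpm₂ : ¬ p ∣ m₂ := by
      intro hd
      obtain ⟨j, rfl⟩ := hd
      exact hp.one_lt.ne' (Nat.isUnit_iff.mp (hm₁sf p ⟨j, by rw [hm₂]; ring⟩))
    have hm₂0 : m₂ ≠ 0 := by rintro rfl; rw [mul_zero] at hm₂; exact hm₁0 hm₂
    have hm₂odd : m₂ % 2 = 1 := by
      rcases Nat.even_or_odd m₂ with he | ho
      · obtain ⟨j, hj⟩ := he
        have h2m : 2 ∣ m₁ := by rw [hm₂, hj]; exact ⟨p * j, by ring⟩
        omega
      · exact Nat.odd_iff.mp ho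
    set T := ordCompl[p] t with hTdef
    set L := 8 * (m₂ * T) with hLdef
    have hcopLp : Nat.Coprime L p := by
      have c8 : Nat.Coprime 8 p := by
        have c2 : Nat.Coprime 2 p := (Nat.coprime_primes Nat.prime_two hp).mpr (Ne.symm hp2)
        have h8 : (8 : ℕ) = 2 ^ 3 := by norm_num
        rw [h8]; exact c2.pow_left 3
      have cm₂ : Nat.Coprime m₂ p := ((Nat.Prime.coprime_iff_not_dvd hp).mpr hpm₂).symm
      have cT : Nat.Coprime T p := (Nat.coprime_ordCompl hp ht0).symm
      exact c8.mul (cm₂.mul cT)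

    haveI := Fact.mk hp
    obtain ⟨v, hv⟩ := FiniteField.exists_nonsquare (F := ZMod p)
      (by rw [ZMod.ringChar_zmod_n]; exact hp2)
    set r := v.val with hrdef
    have hvcast : ((r : ℕ) : ZMod p) = v := ZMod.natCast_rightInverse v
    have hv0 : v ≠ 0 := by rintro rfl; exact hv ⟨0, by ring⟩
    have hr0 : r ≠ 0 := by
      intro h0
      apply hv0
      rw [← hvcast, h0]; simp
    have hrp : r < p := ZMod.val_lt v
    obtain ⟨k, hkL, hkp⟩ := Nat.chineseRemainder hcopLp 1 r
    have hkmod1 : ∀ ℓ : ℕ, 1 < ℓ → ℓ ∣ L → ¬ ℓ ∣ k := by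
      intro ℓ hℓ1 hℓL hℓk
      have hkmod : k % ℓ = 1 % ℓ := hkL.of_dvd hℓL
      have h1ℓ : 1 % ℓ = 1 := Nat.one_mod_eq_one.mpr hℓ1.ne'
      obtain ⟨j, rfl⟩ := hℓk
      rw [Nat.mul_mod_right] at hkmod
      omega
    have hk8 : k % 8 = 1 := by
      have h8L : (8 : ℕ) ∣ L := ⟨m₂ * T, rfl⟩
      have hkmod : k % 8 = 1 % 8 := hkL.of_dvd h8L
      simpa using hkmod
    have hkodd : k % 2 = 1 := by
      have := Nat.mod_mod_of_dvd k (by norm_num : 2 ∣ 8)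
      omega
    have hk4 : k % 4 = 1 := by
      have := Nat.mod_mod_of_dvd k (by norm_num : 4 ∣ 8)
      omega
    have hpk : ¬ p ∣ k := by
      intro hd
      have hkmod : k % p = r % p := hkp
      obtain ⟨j, rfl⟩ := hd
      rw [Nat.mul_mod_right] at hkmod
      rw [Nat.mod_eq_of_lt hrp] at hkmod
      exact hr0 hkmod.symm
    have hcoptk : Nat.Coprime t k := by
      refine coprime_of_no_common_prime ht0 ?_
      intro ℓ hℓp hℓt hℓk
      rcases eq_or_ne ℓ p with rfl | hne
      · exact hpk hℓk
      · have hℓT : ℓ ∣ T := Nat.dvd_ordCompl_of_dvd_not_dvd hℓt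
          (fun hdvd => hne ((Nat.prime_dvd_prime_iff_eq hp hℓp).mp hdvd).symm)
        exact hkmod1 ℓ hℓp.one_lt (hℓT.trans ⟨8 * m₂, by ring⟩) hℓk
    refine ⟨k, Nat.odd_iff.mpr hkodd, ?_⟩
    have hm' : (m : ℤ) = ((t : ℤ)) ^ 2 * ((w : ℤ) * ((p : ℤ) * (m₂ : ℤ))) := by
      have h' : (t : ℕ) ^ 2 * (w * (p * m₂)) = m := by rw [← htm, hm₀, hm₂]
      exact_mod_cast (congrArg (fun x : ℕ => (x : ℤ)) h').symm
    rw [hm', jacobiSym.mul_left, jacobiSym.mul_left, jacobiSym.mul_left]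
    have h1 : jacobiSym ((t : ℤ) ^ 2) k = 1 := by
      apply jacobiSym.sq_one'
      simpa [Int.gcd] using hcoptk
    have hw1 : jacobiSym (w : ℤ) k = 1 := by
      rcases hw with rfl | rfl
      · exact_mod_cast jacobiSym.one_left k
      · have h2' : ((2 : ℕ) : ℤ) = (2 : ℤ) := by norm_num
        rw [h2', jacobiSym.at_two (Nat.odd_iff.mpr hkodd), ZMod.χ₈_nat_mod_eight, hk8]
        decide
    have hpJ : jacobiSym (p : ℤ) k = -1 := by
      rw [jacobiSym.quadratic_reciprocity_one_mod_four'
        (hp.odd_of_ne_two hp2) hk4]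
      have hmodeq : ((k : ℤ)) % ((p : ℕ) : ℤ) = ((r : ℤ)) % ((p : ℕ) : ℤ) := by
        have hkr : k % p = r % p := hkp
        exact_mod_cast congrArg (fun x : ℕ => (x : ℤ)) hkr
      rw [jacobiSym.mod_left' hmodeq]
      apply ZMod.nonsquare_iff_jacobiSym_eq_neg_one.mpr
      rwa [Int.cast_natCast, hvcast]
    have hm2J : jacobiSym (m₂ : ℤ) k = 1 := by
      rw [jacobiSym.quadratic_reciprocity_one_mod_four' (Nat.odd_iff.mpr hm₂odd) hk4]
      have hm₂L : m₂ ∣ L := ⟨8 * T, by ring⟩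
      have hkmod : k % m₂ = 1 % m₂ := hkL.of_dvd hm₂L
      have hmodeq : ((k : ℤ)) % ((m₂ : ℕ) : ℤ) = ((1 : ℤ)) % ((m₂ : ℕ) : ℤ) := by
        exact_mod_cast congrArg (fun x : ℕ => (x : ℤ)) hkmod
      rw [jacobiSym.mod_left' hmodeq]
      exact jacobiSym.one_left m₂
    rw [h1, hw1, hpJ, hm2J]; ring

theorem stmt_12 (a b : ℤ) (ha : 0 < a) (hb : b < 0)
    (hsq : ¬ IsSquare (-(a * b))) :
    ∃ c d : ℤ, 0 < c ∧ 0 < d ∧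
      ∀ x1 x2 x3 x4 : ℤ,
        a * x1 ^ 2 + x1 * x3 + c * x3 ^ 2 + b * x2 ^ 2 + x2 * x4 + d * x4 ^ 2 = 0 →
        x1 = 0 ∧ x2 = 0 ∧ x3 = 0 ∧ x4 = 0 := by
  have hab : 0 < -(a * b) := by nlinarith
  set m : ℕ := (-(a * b)).toNat with hmdef
  have hmcast : (m : ℤ) = -(a * b) := Int.toNat_of_nonneg hab.le
  have hmpos : 0 < m := by
    by_contra h0
    have : m = 0 := by omega
    rw [this] at hmcast
    simp at hmcast
    omega
  have hmns : ¬ IsSquare m := by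
    rintro ⟨s, hs⟩
    exact hsq ⟨(s : ℤ), by rw [← hmcast]; exact_mod_cast hs⟩
  obtain ⟨q, hq, hq2, hqns0⟩ := exists_prime_nonresidue m hmpos hmns
  haveI := Fact.mk hq
  have hqns : ¬ IsSquare ((-(a * b) : ℤ) : ZMod q) := by rwa [hmcast] at hqns0
  have hq0 : (0 : ℤ) < (q : ℤ) := by exact_mod_cast hq.pos
  have hq2le : (2 : ℤ) ≤ (q : ℤ) := by exact_mod_cast hq.two_le
  have hqz : ((q : ℤ)) ≠ 0 := hq0.ne'
  -- q does not divide a or b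
  have hqa : ¬ (q : ℤ) ∣ a := by
    intro hd
    apply hqns
    have h0 : ((a : ℤ) : ZMod q) = 0 := (ZMod.intCast_zmod_eq_zero_iff_dvd _ _).mpr hd
    exact ⟨0, by push_cast; rw [h0]; ring⟩
  have hqb : ¬ (q : ℤ) ∣ b := by
    intro hd
    apply hqns
    have h0 : ((b : ℤ) : ZMod q) = 0 := (ZMod.intCast_zmod_eq_zero_iff_dvd _ _).mpr hd
    exact ⟨0, by push_cast; rw [h0]; ring⟩
  -- coprimality
  have hcop : ∀ A : ℤ, ¬ (q : ℤ) ∣ A → IsCoprime ((q : ℤ)) (4 * A) := by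
    intro A hA
    have hqp : Prime ((q : ℤ)) := Nat.prime_iff_prime_int.mp hq
    refine hqp.coprime_iff_not_dvd.mpr ?_
    intro hd
    rcases hqp.dvd_mul.mp hd with h4 | hA'
    · have h4' : ((q : ℤ)) ∣ 2 ^ 2 := by
        have h24 : (2 : ℤ) ^ 2 = 4 := by norm_num
        rw [h24]; exact h4
      have h2d : ((q : ℤ)) ∣ 2 := hqp.dvd_of_dvd_pow h4'
      have hle : ((q : ℤ)) ≤ 2 := Int.le_of_dvd (by norm_num) h2d
      have : (q : ℤ) = 2 := by omega
      exact hq2 (by exact_mod_cast this)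
    · exact hA hA'
  have hcopa := hcop a hqa
  have hcopb := hcop b hqb
  obtain ⟨e1, _, he1neg, _, he1mod, _, hc4, _⟩ := crt_aux a (q : ℤ) ha.ne' hqz hcopa
  obtain ⟨_, e2, _, he2pos, _, he2mod, _, hd4⟩ := crt_aux b (q : ℤ) hb.ne hqz hcopb
  obtain ⟨c, hc⟩ := hc4
  obtain ⟨d, hd⟩ := hd4
  have hcpos : 0 < c := by nlinarith
  have hdpos : 0 < d := by nlinarith
  refine ⟨c, d, hcpos, hdpos, ?_⟩
  intro x1 x2 x3 x4 hx
  set E1 : ℤ := -(b * e1) with hE1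
  set E2 : ℤ := -(a * e2) with hE2
  -- congruence facts for the mod-q lemma
  have h1 : ∀ x y : ℤ, (q : ℤ) ∣ b * x ^ 2 + a * y ^ 2 → (q : ℤ) ∣ x ∧ (q : ℤ) ∣ y := by
    apply zmod_pair
    have : (-(b * a) : ℤ) = -(a * b) := by ring
    rw [this]
    exact hqns
  have h2 : ∀ x y : ℤ, (q : ℤ) ∣ E1 * x ^ 2 + E2 * y ^ 2 → (q : ℤ) ∣ x ∧ (q : ℤ) ∣ y := by
    apply zmod_pair
    obtain ⟨s1, hs1⟩ := he1mod
    obtain ⟨s2, hs2⟩ := he2mod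
    have he1' : e1 = 1 + (q : ℤ) * s1 := by linarith
    have he2' : e2 = 1 + (q : ℤ) * s2 := by linarith
    have hcast : ((-(E1 * E2) : ℤ) : ZMod q) = ((-(a * b) : ℤ) : ZMod q) := by
      rw [hE1, hE2, he1', he2']
      push_cast
      rw [ZMod.natCast_self]
      ring
    rw [hcast]
    exact hqns
  have heq : b * (2 * a * x1 + x3) ^ 2 + a * (2 * b * x2 + x4) ^ 2 +
      (q : ℤ) * (E1 * x3 ^ 2 + E2 * x4 ^ 2) = 0 := by
    rw [hE1, hE2]
    linear_combination (4 * a * b) * hx + (b * x3 ^ 2) * hc + (a * x4 ^ 2) * hd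
  obtain ⟨hX, hY, hZ, hW⟩ := descent q hq b a E1 E2 h1 h2 _ _ _ _ heq
  have hx3 : x3 = 0 := hZ
  have hx4 : x4 = 0 := hW
  have hx1 : x1 = 0 := by
    rw [hx3] at hX
    have : (2 * a) * x1 = 0 := by linarith
    rcases mul_eq_zero.mp this with h' | h'
    · exfalso; omega
    · exact h'
  have hx2 : x2 = 0 := by
    rw [hx4] at hY
    have : (2 * b) * x2 = 0 := by linarith
    rcases mul_eq_zero.mp this with h' | h'
    · exfalso; omega
    · exact h'
  exact ⟨hx1, hx2, hx3, hx4⟩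
end
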